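/- Let Φ be a connected quaternion unit gain graph on n vertices with maximum degree Δ ≥ 2. Then the row left rank of A(Φ) satisfies r(Φ) ≥ (n - 2)/(Δ - 1). -/

import Mathlib

/-- The row left rank of a quaternion matrix: the rank (dimension of the span, with
quaternion scalars acting on the left) of the set of rows of `A`. -/
noncomputable def rowLeftRank {m n : Type*} (A : Matrix m n (Quaternion ℝ)) : ℕ :=
  (Module.rank (Quaternion ℝ)
    (Submodule.span (Quaternion ℝ) (Set.range (fun i j => A i j)))).toNat

/-- The row right rank: scalars act on the right, i.e. over the opposite ring. -/
noncomputable def rowRightRank {m n : Type*} (A : Matrix m n (Quaternion ℝ)) : ℕ :=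
  (Module.rank (Quaternion ℝ)ᵐᵒᵖ
    (Submodule.span (Quaternion ℝ)ᵐᵒᵖ (Set.range (fun i j => A i j)))).toNat

/-- The column right rank: the span of the columns with scalars acting on the right. -/
noncomputable def colRightRank {m n : Type*} (A : Matrix m n (Quaternion ℝ)) : ℕ :=
  (Module.rank (Quaternion ℝ)ᵐᵒᵖ
    (Submodule.span (Quaternion ℝ)ᵐᵒᵖ (Set.range (fun j i => A i j)))).toNat

/-- A quaternion unit gain graph on vertex type `V`. -/
structure QuaternionUnitGainGraph (V : Type*) where
  G : SimpleGraph V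
  gain : V → V → Quaternion ℝ
  gain_unit : ∀ u v, G.Adj u v → ‖gain u v‖ = 1
  gain_inv : ∀ u v, G.Adj u v → gain v u = star (gain u v)
  gain_zero : ∀ u v, ¬ G.Adj u v → gain u v = 0

/-- The (Hermitian, quaternion) adjacency matrix of a quaternion unit gain graph. -/
def QuaternionUnitGainGraph.adjMatrix {V : Type*} (Φ : QuaternionUnitGainGraph V) :
    Matrix V V (Quaternion ℝ) := fun u v => Φ.gain u v

/-- The row left rank of a quaternion unit gain graph. -/
noncomputable def QuaternionUnitGainGraph.rank {V : Type*} (Φ : QuaternionUnitGainGraph V) : ℕ :=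
  rowLeftRank Φ.adjMatrix

namespace QGGAux

open Finset

local notation "ℍ" => Quaternion ℝ

variable {V : Type*} [Fintype V] [DecidableEq V]
variable (Φ : QuaternionUnitGainGraph V) [DecidableRel Φ.G.Adj]

set_option linter.unusedSectionVars false

noncomputable local instance : DecidableEq (V → ℍ) := Classical.decEq _

/-- The row of the adjacency matrix at a vertex. -/
noncomputable def row (v : V) : V → ℍ := Φ.adjMatrix v

lemma row_eq_zero {u v : V} (h : ¬ Φ.G.Adj u v) : row Φ u v = 0 := Φ.gain_zero u v h

lemma row_ne_zero {u v : V} (h : Φ.G.Adj u v) : row Φ u v ≠ 0 := by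
  intro h0
  have h1 := Φ.gain_unit u v h
  have : Φ.gain u v = 0 := h0
  rw [this] at h1
  simp at h1

/-- The span of the rows indexed by a finite set of vertices. -/
noncomputable def SB (B : Finset V) : Submodule ℍ (V → ℍ) :=
  Submodule.span ℍ (↑(B.image (row Φ)) : Set (V → ℍ))

lemma row_mem_SB {B : Finset V} {b : V} (hb : b ∈ B) : row Φ b ∈ SB Φ B := by
  apply Submodule.subset_span
  simp only [Finset.coe_image, Set.mem_image, Finset.mem_coe]
  exact ⟨b, hb, rfl⟩

lemma span_vanish {B : Finset V} {z : V} (hz : ∀ b ∈ B, ¬ Φ.G.Adj b z)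
    {g : V → ℍ} (hg : g ∈ SB Φ B) : g z = 0 := by
  have hle : SB Φ B ≤ LinearMap.ker (LinearMap.proj (R := ℍ) (φ := fun _ : V => ℍ) z) := by
    rw [SB, Submodule.span_le]
    intro y hy
    simp only [Finset.coe_image, Set.mem_image, Finset.mem_coe] at hy
    obtain ⟨b, hb, rfl⟩ := hy
    simp only [SetLike.mem_coe, LinearMap.mem_ker, LinearMap.proj_apply]
    exact row_eq_zero Φ (hz b hb)
  simpa using hle hg

/-- The invariant for the greedy growth. -/
def Good (B : Finset V) : Prop :=
  B.Nonempty ∧ Set.InjOn (row Φ) ↑B ∧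
    LinearIndependent ℍ (fun x => (x : V → ℍ) :
      (↑(B.image (row Φ)) : Set (V → ℍ)) → (V → ℍ)) ∧
    2 * B.card ≤ ((B ×ˢ B).filter fun p => Φ.G.Adj p.1 p.2).card + 2


lemma good_insert {B : Finset V} (hB : Good Φ B) {w : V} (hw : w ∉ B)
    {b₀ : V} (hb₀ : b₀ ∈ B) (hadj : Φ.G.Adj b₀ w)
    (hspan : row Φ w ∉ SB Φ B) : Good Φ (insert w B) := by
  obtain ⟨hne, hinj, hli, hedge⟩ := hB
  have hwb₀ : b₀ ≠ w := fun h => hw (h ▸ hb₀)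
  refine ⟨Finset.insert_nonempty w B, ?_, ?_, ?_⟩
  · -- injectivity
    rw [Finset.coe_insert]
    intro x hx y hy hxy
    have hx' := Set.mem_insert_iff.mp hx
    have hy' := Set.mem_insert_iff.mp hy
    by_cases hxw : x = w
    · by_cases hyw : y = w
      · rw [hxw, hyw]
      · have hyB : y ∈ B := Finset.mem_coe.mp (hy'.resolve_left hyw)
        exact absurd (by rw [← hxw, hxy]; exact row_mem_SB Φ hyB) hspan
    · have hxB : x ∈ B := Finset.mem_coe.mp (hx'.resolve_left hxw)
      by_cases hyw : y = w
      · exact absurd (by rw [← hyw, ← hxy]; exact row_mem_SB Φ hxB) hspan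
      · have hyB : y ∈ B := Finset.mem_coe.mp (hy'.resolve_left hyw)
        exact hinj (Finset.mem_coe.mpr hxB) (Finset.mem_coe.mpr hyB) hxy
  · -- linear independence
    rw [Finset.image_insert, Finset.coe_insert]
    exact LinearIndepOn.id_insert hli hspan
  · -- edge count
    have hcard : (insert w B).card = B.card + 1 := Finset.card_insert_of_notMem hw
    set E := (B ×ˢ B).filter (fun p => Φ.G.Adj p.1 p.2) with hE
    set E' := ((insert w B) ×ˢ (insert w B)).filter (fun p => Φ.G.Adj p.1 p.2) with hE'
    have hsub : E ∪ {(b₀, w), (w, b₀)} ⊆ E' := by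
      intro p hp
      rcases Finset.mem_union.mp hp with hp | hp
      · rw [hE, Finset.mem_filter] at hp
        rw [hE', Finset.mem_filter]
        refine ⟨?_, hp.2⟩
        have hp1 := Finset.mem_product.mp hp.1
        rw [Finset.mem_product]
        exact ⟨Finset.mem_insert_of_mem hp1.1, Finset.mem_insert_of_mem hp1.2⟩
      · simp only [Finset.mem_insert, Finset.mem_singleton] at hp
        rcases hp with rfl | rfl <;>
          · rw [hE', Finset.mem_filter, Finset.mem_product]
            simp [hb₀, hadj, hadj.symm]
    have hdisj : Disjoint E ({(b₀, w), (w, b₀)} : Finset (V × V)) := by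
      rw [Finset.disjoint_right]
      intro p hp hpE
      simp only [Finset.mem_insert, Finset.mem_singleton] at hp
      rw [hE, Finset.mem_filter, Finset.mem_product] at hpE
      rcases hp with rfl | rfl
      · exact hw hpE.1.2
      · exact hw hpE.1.1
    have hpaircard : ({(b₀, w), (w, b₀)} : Finset (V × V)).card = 2 := by
      rw [Finset.card_insert_of_notMem (by simp [hwb₀]), Finset.card_singleton]
    have h2 : E.card + 2 ≤ E'.card := by
      calc E.card + 2 = (E ∪ {(b₀, w), (w, b₀)}).card := by
            rw [Finset.card_union_of_disjoint hdisj, hpaircard]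
        _ ≤ E'.card := Finset.card_le_card hsub
    rw [hcard]
    omega
lemma grow (hconn : Φ.G.Connected) :
    ∀ (t : ℕ) (B : Finset V), Good Φ B → Fintype.card V ≤ B.card + t →
    ∃ B' : Finset V, Good Φ B' ∧ (∀ x : V, row Φ x ∈ SB Φ B') ∧
      (∀ x ∉ B', ∃ b ∈ B', Φ.G.Adj b x) := by
  intro t
  induction t with
  | zero =>
    intro B hB hcard
    have hBu : B = Finset.univ := by
      apply Finset.eq_univ_of_card
      have := Finset.card_le_univ B
      omega
    subst hBu
    refine ⟨Finset.univ, hB, fun x => row_mem_SB Φ (Finset.mem_univ x), ?_⟩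
    intro x hx
    exact absurd (Finset.mem_univ x) hx
  | succ t ih =>
    intro B hB hcard
    by_cases hc : ∃ w, w ∉ B ∧ (∃ b ∈ B, Φ.G.Adj b w) ∧ row Φ w ∉ SB Φ B
    · obtain ⟨w, hw, ⟨b₀, hb₀, hadj⟩, hsp⟩ := hc
      refine ih (insert w B) (good_insert Φ hB hw hb₀ hadj hsp) ?_
      rw [Finset.card_insert_of_notMem hw]
      omega
    · push_neg at hc
      have hall : ∀ w, w ∉ B → (∃ b ∈ B, Φ.G.Adj b w) → row Φ w ∈ SB Φ B := by
        intro w hw hnb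
        by_contra hne
        exact hne (hc w hw hnb)
      have hcover : ∀ x : V, x ∈ B ∨ ∃ b ∈ B, Φ.G.Adj b x := by
        by_contra hcov
        push_neg at hcov
        obtain ⟨x, hxB, hxN⟩ := hcov
        obtain ⟨b₀, hb₀⟩ := hB.1
        obtain ⟨p⟩ := hconn.preconnected b₀ x
        have hbR : b₀ ∈ {y : V | y ∈ B ∨ ∃ b ∈ B, Φ.G.Adj b y} := Or.inl hb₀
        have hxR : x ∉ {y : V | y ∈ B ∨ ∃ b ∈ B, Φ.G.Adj b y} := by
          simp only [Set.mem_setOf_eq]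
          push_neg
          exact ⟨hxB, hxN⟩
        obtain ⟨d, _, hdS, hdnS⟩ := p.exists_boundary_dart _ hbR hxR
        simp only [Set.mem_setOf_eq] at hdS hdnS
        push_neg at hdnS
        obtain ⟨hz1, hz2⟩ := hdnS
        have hyS : row Φ d.fst ∈ SB Φ B := by
          by_cases hyB : d.fst ∈ B
          · exact row_mem_SB Φ hyB
          · rcases hdS with hyB' | hnb
            · exact absurd hyB' hyB
            · exact hall d.fst hyB hnb
        exact row_ne_zero Φ d.adj (span_vanish Φ hz2 hyS)
      refine ⟨B, hB, ?_, ?_⟩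
      · intro x
        by_cases hxB : x ∈ B
        · exact row_mem_SB Φ hxB
        · exact hall x hxB ((hcover x).resolve_left hxB)
      · intro x hx
        exact (hcover x).resolve_left hx
lemma main_count (hconn : Φ.G.Connected) (hΔ : 2 ≤ Φ.G.maxDegree) :
    ∃ r : ℕ, (rowLeftRank Φ.adjMatrix = r) ∧
      Fintype.card V + 2 * r ≤ Φ.G.maxDegree * r + 2 + r := by
  haveI : Nonempty V := hconn.nonempty
  obtain ⟨v₀, hv₀⟩ := Φ.G.exists_maximal_degree_vertex
  have hdeg : 0 < Φ.G.degree v₀ := by omega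
  obtain ⟨u₀, hu₀⟩ := Φ.G.degree_pos_iff_exists_adj v₀ |>.mp hdeg
  have hrow0 : row Φ v₀ ≠ 0 := by
    intro h
    exact row_ne_zero Φ hu₀ (by rw [h]; rfl)
  have hGood0 : Good Φ {v₀} := by
    refine ⟨Finset.singleton_nonempty v₀, by rw [Finset.coe_singleton]; exact Set.injOn_singleton _ _, ?_, ?_⟩
    · rw [Finset.image_singleton, Finset.coe_singleton]
      exact (linearIndepOn_singleton_iff ℍ (v := id)).mpr hrow0
    · simp
  obtain ⟨B, hGood, hspans, hnbr⟩ :=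
    grow Φ hconn (Fintype.card V) {v₀} hGood0 (by simp)
  refine ⟨B.card, ?_, ?_⟩
  · -- rank identification
    have h1 : Submodule.span ℍ (Set.range fun i j => Φ.adjMatrix i j) = SB Φ B := by
      apply le_antisymm
      · rw [Submodule.span_le]
        rintro y ⟨x, rfl⟩
        exact hspans x
      · rw [SB, Submodule.span_le]
        intro y hy
        simp only [Finset.coe_image, Set.mem_image, Finset.mem_coe] at hy
        obtain ⟨b, _, rfl⟩ := hy
        exact Submodule.subset_span ⟨b, rfl⟩
    rw [rowLeftRank, h1, SB, rank_span_set hGood.2.2.1]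
    simp [Finset.coe_sort_coe, Cardinal.mk_coe_finset, Finset.card_image_of_injOn hGood.2.1]
  · -- the counting argument
    set A := fun p : V × V => Φ.G.Adj p.1 p.2 with hA
    set EBB := (B ×ˢ B).filter A with hEBB
    set EBK := (B ×ˢ Bᶜ).filter A with hEBK
    -- every vertex outside B maps into EBK via an incident edge
    have hK : Bᶜ.card ≤ EBK.card := by
      have hsub : Bᶜ ⊆ EBK.image Prod.snd := by
        intro w hw
        have hw' : w ∉ B := Finset.mem_compl.mp hw
        obtain ⟨b, hb, hadj⟩ := hnbr w hw'
        refine Finset.mem_image.mpr ⟨(b, w), ?_, rfl⟩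
        rw [hEBK, Finset.mem_filter, Finset.mem_product]
        exact ⟨⟨hb, hw⟩, hadj⟩
      calc Bᶜ.card ≤ (EBK.image Prod.snd).card := Finset.card_le_card hsub
        _ ≤ EBK.card := Finset.card_image_le
    -- edge counting via degrees
    have hsplit : EBB.card + EBK.card = ((B ×ˢ Finset.univ).filter A).card := by
      rw [← Finset.card_union_of_disjoint ?_]
      · congr 1
        ext p
        simp only [hEBB, hEBK, Finset.mem_union, Finset.mem_filter, Finset.mem_product,
          Finset.mem_compl, Finset.mem_univ, and_true]
        by_cases hp : p.2 ∈ B <;> tauto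
      · rw [Finset.disjoint_left]
        intro p hp hp'
        rw [hEBB, Finset.mem_filter, Finset.mem_product] at hp
        rw [hEBK, Finset.mem_filter, Finset.mem_product, Finset.mem_compl] at hp'
        exact hp'.1.2 hp.1.2
    have hEdeg : ((B ×ˢ Finset.univ).filter A).card ≤ Φ.G.maxDegree * B.card := by
      rw [Finset.card_eq_sum_card_fiberwise
        (f := Prod.fst) (t := B)
        (fun p hp => (Finset.mem_product.mp (Finset.mem_filter.mp hp).1).1)]
      have hfib : ∀ b ∈ B,
          (((B ×ˢ Finset.univ).filter A).filter fun p => p.1 = b).card ≤ Φ.G.maxDegree := by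
        intro b _
        have h1 : (((B ×ˢ Finset.univ).filter A).filter fun p => p.1 = b).card
            ≤ (Φ.G.neighborFinset b).card := by
          apply Finset.card_le_card_of_injOn Prod.snd
          · intro p hp
            simp only [Finset.mem_coe, Finset.mem_filter] at hp
            rw [Finset.mem_coe, SimpleGraph.mem_neighborFinset]
            have := hp.1.2
            rw [hA] at this
            rw [← hp.2]
            exact this
          · intro p hp q hq hpq
            simp only [Finset.mem_coe, Finset.mem_filter] at hp hq
            exact Prod.ext (hp.2.trans hq.2.symm) hpq
        calc _ ≤ (Φ.G.neighborFinset b).card := h1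
          _ = Φ.G.degree b := rfl
          _ ≤ Φ.G.maxDegree := Φ.G.degree_le_maxDegree b
      calc ∑ b ∈ B, (((B ×ˢ Finset.univ).filter A).filter fun p => p.1 = b).card
          ≤ ∑ _b ∈ B, Φ.G.maxDegree := Finset.sum_le_sum hfib
        _ = B.card * Φ.G.maxDegree := by rw [Finset.sum_const, smul_eq_mul]
        _ = Φ.G.maxDegree * B.card := Nat.mul_comm _ _
    have hEB : 2 * B.card ≤ EBB.card + 2 := hGood.2.2.2
    have hcompl : B.card + Bᶜ.card = Fintype.card V := Finset.card_add_card_compl B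
    have : EBB.card + EBK.card ≤ Φ.G.maxDegree * B.card := hsplit ▸ hEdeg
    omega
end QGGAux

/-- For a connected quaternion unit gain graph on `n` vertices with maximum degree
`Δ ≥ 2`, the row left rank is at least `(n - 2) / (Δ - 1)`. -/
theorem gain_connected_rank_ge {V : Type*} [Fintype V] [DecidableEq V]
    (Φ : QuaternionUnitGainGraph V) [DecidableRel Φ.G.Adj]
    (hconn : Φ.G.Connected) (hΔ : 2 ≤ Φ.G.maxDegree) :
    ((Fintype.card V : ℝ) - 2) / ((Φ.G.maxDegree : ℝ) - 1) ≤ (Φ.rank : ℝ) := by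
  obtain ⟨r, hr, hineq⟩ := QGGAux.main_count Φ hconn hΔ
  have hrank : Φ.rank = r := hr
  have h2 : (2:ℝ) ≤ (Φ.G.maxDegree : ℝ) := by exact_mod_cast hΔ
  rw [div_le_iff₀ (by linarith : (0:ℝ) < (Φ.G.maxDegree : ℝ) - 1)]
  have hineqR : (Fintype.card V : ℝ) + 2 * r ≤ (Φ.G.maxDegree : ℝ) * r + 2 + r := by
    exact_mod_cast hineq
  rw [hrank]
  nlinarith [hineqR]
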